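/- For every integer d ≥ 2 and all reals λ ≥ 0, r ∈ [0,1] with λ + r > 0: ∫_0^π sin^{d−2}(θ) · (λ² − 2rλ cos(θ) + r²)^{−(d−3)/2} dθ = 2^{d−1} · (λ+r)^{3−d} · S_{d−3}( 4λr / (λ+r)² ). -/

import Mathlib

open MeasureTheory Real

/-- The special function `S_s(z) = ∫₀¹ t^{s+1} (1-t²)^{s/2} (1-zt²)^{-s/2} dt`. -/
noncomputable def Sfun (s z : ℝ) : ℝ :=
  ∫ t in Set.Ioo (0 : ℝ) 1,
    t ^ (s + 1) * (1 - t ^ 2) ^ (s / 2) * (1 - z * t ^ 2) ^ (-(s / 2))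

/-- **Landen transform lemma.** For every integer `d ≥ 2`, `λ ≥ 0` and `r ∈ [0,1]` with
`λ + r > 0`,
`∫₀^π sin^{d-2}θ (λ² - 2rλcosθ + r²)^{-(d-3)/2} dθ = 2^{d-1} (λ+r)^{3-d} S_{d-3}(4λr/(λ+r)²)`. -/
theorem landen_transform_lemma
    (d : ℕ) (hd : 2 ≤ d) (l r : ℝ) (hlpos : 0 ≤ l) (hr : r ∈ Set.Icc (0 : ℝ) 1)
    (hlr : 0 < l + r) :
    ∫ θ in Set.Ioo (0 : ℝ) Real.pi,
        Real.sin θ ^ (d - 2)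
          * (l ^ 2 - 2 * r * l * Real.cos θ + r ^ 2) ^ (-(((d : ℝ) - 3) / 2))
      = 2 ^ (d - 1) * (l + r) ^ (3 - (d : ℝ))
          * Sfun ((d : ℝ) - 3) (4 * l * r / (l + r) ^ 2) := by
  have hr0 : 0 ≤ r := hr.1
  set z : ℝ := 4 * l * r / (l + r) ^ 2 with hzdef
  have hlr0 : (l + r) ≠ 0 := ne_of_gt hlr
  have hz0 : 0 ≤ z := by positivity
  have hz1 : z ≤ 1 := by
    rw [hzdef, div_le_one (by positivity)]
    nlinarith [sq_nonneg (l - r)]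
  have hpi := Real.pi_pos
  -- the image of `(0, π)` under `θ ↦ cos (θ/2)` is `(0, 1)`
  have himg : Set.Ioo (0:ℝ) 1 = (fun θ : ℝ => Real.cos (θ / 2)) '' Set.Ioo 0 Real.pi := by
    ext t
    constructor
    · rintro ⟨ht0, ht1⟩
      refine ⟨2 * Real.arccos t, ⟨?_, ?_⟩, ?_⟩
      · have := Real.arccos_pos.2 ht1; linarith
      · have := Real.arccos_lt_pi_div_two.2 ht0; linarith
      · simp only [mul_div_cancel_left₀ _ (two_ne_zero (α := ℝ))]
        exact Real.cos_arccos (by linarith) ht1.le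
    · rintro ⟨θ, ⟨hθ0, hθπ⟩, rfl⟩
      constructor
      · exact Real.cos_pos_of_mem_Ioo ⟨by linarith, by linarith⟩
      · have : Real.cos (θ / 2) < Real.cos 0 :=
          Real.cos_lt_cos_of_nonneg_of_le_pi (le_refl 0) (by linarith) (by linarith)
        simpa using this
  -- substitution t = cos (θ/2)
  have hsub : Sfun ((d:ℝ) - 3) z
      = ∫ θ in Set.Ioo (0:ℝ) Real.pi,
          |(-Real.sin (θ / 2) / 2)| •
            (Real.cos (θ / 2) ^ ((d:ℝ) - 3 + 1)
              * (1 - Real.cos (θ / 2) ^ 2) ^ (((d:ℝ) - 3) / 2)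
              * (1 - z * Real.cos (θ / 2) ^ 2) ^ (-(((d:ℝ) - 3) / 2))) := by
    rw [Sfun, himg]
    refine MeasureTheory.integral_image_eq_integral_abs_deriv_smul measurableSet_Ioo
      (f' := fun θ => -Real.sin (θ / 2) / 2) (fun x hx => ?_) (fun a ha b hb hab => ?_) _
    · have h1 : HasDerivAt (fun θ : ℝ => θ / 2) (1 / 2) x := by
        simpa using (hasDerivAt_id x).div_const 2
      have h2 : HasDerivAt (fun θ : ℝ => Real.cos (θ / 2))
          (-Real.sin (x / 2) * (1 / 2)) x := HasDerivAt.comp (h₂ := Real.cos) x (Real.hasDerivAt_cos (x / 2)) h1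
      have : -Real.sin (x / 2) * (1 / 2) = -Real.sin (x / 2) / 2 := by ring
      exact (this ▸ h2).hasDerivWithinAt
    · have hab' : Real.cos (a / 2) = Real.cos (b / 2) := hab
      have := Real.injOn_cos ⟨by linarith [ha.1], by linarith [ha.2]⟩
        ⟨by linarith [hb.1], by linarith [hb.2]⟩ hab'
      linarith
  rw [hsub, ← MeasureTheory.integral_const_mul]
  refine MeasureTheory.setIntegral_congr_fun measurableSet_Ioo (fun θ hθ => ?_)
  obtain ⟨hθ0, hθπ⟩ := hθ
  set s := Real.sin (θ / 2) with hs
  set c := Real.cos (θ / 2) with hc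
  have hspos : 0 < s := Real.sin_pos_of_pos_of_lt_pi (by linarith) (by linarith)
  have hcpos : 0 < c := Real.cos_pos_of_mem_Ioo ⟨by linarith, by linarith⟩
  have hc1 : c < 1 := by
    have : Real.cos (θ / 2) < Real.cos 0 :=
      Real.cos_lt_cos_of_nonneg_of_le_pi (le_refl 0) (by linarith) (by linarith)
    simpa [hc] using this
  have hsc : s ^ 2 = 1 - c ^ 2 := by
    have := Real.sin_sq_add_cos_sq (θ / 2); rw [← hs, ← hc] at this; linarith
  have hzc : 0 < 1 - z * c ^ 2 := by nlinarith [sq_nonneg c]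
  have hcosθ : Real.cos θ = 2 * c ^ 2 - 1 := by
    have : Real.cos (2 * (θ / 2)) = 2 * Real.cos (θ / 2) ^ 2 - 1 := Real.cos_two_mul _
    rw [← hc] at this; rw [← this]; ring_nf
  have hsinθ : Real.sin θ = 2 * s * c := by
    have : Real.sin (2 * (θ / 2)) = 2 * Real.sin (θ / 2) * Real.cos (θ / 2) :=
      Real.sin_two_mul _
    rw [← hs, ← hc] at this; rw [← this]; ring_nf
  have habs : |(-s / 2)| = s / 2 := by
    rw [abs_of_nonpos (by linarith)]; ring
  -- base identity
  have hbase : l ^ 2 - 2 * r * l * Real.cos θ + r ^ 2 = (l + r) ^ 2 * (1 - z * c ^ 2) := by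
    rw [hcosθ, hzdef]; field_simp; ring
  have hd2 : ((d : ℝ) - 2) = ((d - 2 : ℕ) : ℝ) := by
    rw [Nat.cast_sub hd]; norm_num
  -- rpow computations
  have h1 : ((l + r) ^ 2 * (1 - z * c ^ 2)) ^ (-(((d:ℝ) - 3) / 2))
      = (l + r) ^ (3 - (d:ℝ)) * (1 - z * c ^ 2) ^ (-(((d:ℝ) - 3) / 2)) := by
    rw [Real.mul_rpow (by positivity) hzc.le]
    congr 1
    rw [← Real.rpow_natCast (l + r) 2, ← Real.rpow_mul hlr.le]
    norm_num
    ring_nf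
  have h2 : (1 - c ^ 2) ^ (((d:ℝ) - 3) / 2) = s ^ ((d:ℝ) - 3) := by
    rw [← hsc, ← Real.rpow_natCast s 2, ← Real.rpow_mul hspos.le]
    ring_nf
  have h3 : Real.sin θ ^ (d - 2) = 2 ^ (d - 2) * s ^ ((d:ℝ) - 2) * c ^ ((d:ℝ) - 2) := by
    rw [hsinθ, mul_pow, mul_pow, hd2, Real.rpow_natCast, Real.rpow_natCast]
  have h4 : c ^ ((d:ℝ) - 3 + 1) = c ^ ((d:ℝ) - 2) := by
    rw [show (d:ℝ) - 3 + 1 = (d:ℝ) - 2 by ring]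
  have h5 : s ^ ((d:ℝ) - 3) * s = s ^ ((d:ℝ) - 2) := by
    rw [show (d:ℝ) - 2 = ((d:ℝ) - 3) + 1 by ring, Real.rpow_add_one hspos.ne']
  have h6 : (2:ℝ) ^ (d - 1) = 2 ^ (d - 2) * 2 := by
    rw [← pow_succ]; congr 1; omega
  rw [hbase, h1, smul_eq_mul, habs, h4, h2, h3, h6]
  field_simp
  rw [← h5]
  ring
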